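/- Let p be an odd prime and r a positive integer with r ≡ a (mod p-1) where 1 ≤ a ≤ p-1. Then the sum S_r = Σ_{0<j<r, j≡a mod (p-1)} C(r,j) is divisible by p. -/

import Mathlib

open Finset

theorem stmt_0 (p r a : ℕ) (hp : p.Prime) (hodd : Odd p) (hr : 1 ≤ r)
    (ha1 : 1 ≤ a) (ha2 : a ≤ p - 1) (hra : r ≡ a [MOD p - 1]) :
    (p : ℤ) ∣ ∑ j ∈ (Finset.Ioo 0 r).filter (fun j => j % (p - 1) = a % (p - 1)),
      (r.choose j : ℤ) := by
  haveI : Fact p.Prime := ⟨hp⟩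
  classical
  set d := p - 1 with hd
  have hp2 : p ≠ 2 := by rintro rfl; exact (Nat.not_odd_iff_even.mpr even_two) hodd
  have hp3 : 3 ≤ p := by have := hp.two_le; omega
  have hd2 : 2 ≤ d := by omega
  have hcard : Fintype.card (ZMod p) = p := ZMod.card p
  have hra' : r % d = a % d := hra
  have h_a_le_r : a ≤ r := by
    by_contra h
    push_neg at h
    have hrd : r < d := lt_of_lt_of_le h ha2
    have hra'' := hra'
    rw [Nat.mod_eq_of_lt hrd] at hra''
    rcases eq_or_lt_of_le ha2 with hA | hA
    · rw [hA, Nat.mod_self] at hra''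
      omega
    · rw [Nat.mod_eq_of_lt hA] at hra''
      omega
  obtain ⟨k, hk⟩ : ∃ k, r = a + d * k := by
    obtain ⟨k, hk⟩ := (Nat.modEq_iff_dvd' h_a_le_r).mp hra'.symm
    exact ⟨k, by omega⟩
  have hcond : ∀ j : ℕ, (d ∣ j + (d - a)) ↔ j % d = a % d := by
    intro j
    have hda : a + (d - a) = d := by omega
    constructor
    · intro h
      have h1 : j + (d - a) ≡ a + (d - a) [MOD d] := by
        rw [hda]
        exact (Nat.modEq_zero_iff_dvd.mpr h).trans (Nat.modEq_zero_iff_dvd.mpr dvd_rfl).symm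
      exact Nat.ModEq.add_right_cancel' _ h1
    · intro h
      have h1 : j + (d - a) ≡ a + (d - a) [MOD d] := Nat.ModEq.add_right _ h
      rw [hda] at h1
      exact Nat.modEq_zero_iff_dvd.mp (h1.trans (Nat.modEq_zero_iff_dvd.mpr dvd_rfl))
  have hadr : d ∣ r ↔ a = d := by
    constructor
    · intro h
      have h0 : a % d = 0 := by
        rw [← hra']
        exact Nat.mod_eq_zero_of_dvd h
      have hda : d ∣ a := Nat.dvd_of_mod_eq_zero h0
      exact Nat.le_antisymm ha2 (Nat.le_of_dvd (by omega) hda)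
    · intro h
      subst h
      exact Nat.dvd_of_mod_eq_zero (by rw [hra', Nat.mod_self])
  have husum : ∀ m : ℕ, (∑ x : (ZMod p)ˣ, ((x : ZMod p)) ^ m) = if d ∣ m then -1 else 0 := by
    intro m
    have := FiniteField.sum_pow_units (ZMod p) m
    rw [hcard] at this
    simpa using this
  have keyA : ∑ x : (ZMod p)ˣ, ((x : ZMod p) + 1) ^ r * (x : ZMod p) ^ (d - a)
      = -∑ j ∈ (range (r + 1)).filter (fun j => j % d = a % d), (r.choose j : ZMod p) := by
    have hterm : ∀ x : (ZMod p)ˣ, ((x : ZMod p) + 1) ^ r * (x : ZMod p) ^ (d - a)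
        = ∑ j ∈ range (r + 1), (r.choose j : ZMod p) * (x : ZMod p) ^ (j + (d - a)) := by
      intro x
      rw [add_pow, Finset.sum_mul]
      refine Finset.sum_congr rfl fun j hj => ?_
      rw [one_pow, mul_one, pow_add]
      ring
    rw [Finset.sum_congr rfl fun x _ => hterm x, Finset.sum_comm]
    have hstep : ∀ j ∈ range (r + 1),
        (∑ x : (ZMod p)ˣ, (r.choose j : ZMod p) * (x : ZMod p) ^ (j + (d - a)))
        = if j % d = a % d then -(r.choose j : ZMod p) else 0 := by
      intro j _
      rw [← Finset.mul_sum, husum]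
      by_cases h : j % d = a % d
      · rw [if_pos ((hcond j).mpr h), if_pos h]; ring
      · rw [if_neg (fun hh => h ((hcond j).mp hh)), if_neg h, mul_zero]
    rw [Finset.sum_congr rfl hstep, Finset.sum_filter, ← Finset.sum_neg_distrib]
    refine Finset.sum_congr rfl fun j _ => ?_
    split_ifs <;> simp
  have keyB : ∑ x : (ZMod p)ˣ, ((x : ZMod p) + 1) ^ r * (x : ZMod p) ^ (d - a)
      = (if d ∣ r then (-1 : ZMod p) else 0) - 1 := by
    have hterm : ∀ x : (ZMod p)ˣ, ((x : ZMod p) + 1) ^ r * (x : ZMod p) ^ (d - a)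
        = (((x⁻¹ : (ZMod p)ˣ) : ZMod p) + 1) ^ r := by
      intro x
      have hx0 : (x : ZMod p) ≠ 0 := x.ne_zero
      have hxd : (x : ZMod p) ^ d = 1 := ZMod.pow_card_sub_one_eq_one hx0
      have hxr : (x : ZMod p) ^ r = (x : ZMod p) ^ a := by
        rw [hk, pow_add, pow_mul, hxd, one_pow, mul_one]
      have hmul : (x : ZMod p) ^ (d - a) * (x : ZMod p) ^ r = 1 := by
        rw [hxr, ← pow_add, Nat.sub_add_cancel ha2]
        exact hxd
      have hsub : (x : ZMod p) ^ (d - a) = ((x : ZMod p) ^ r)⁻¹ :=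
        eq_inv_of_mul_eq_one_left hmul
      have hinv : ((x⁻¹ : (ZMod p)ˣ) : ZMod p) = ((x : ZMod p))⁻¹ := Units.val_inv_eq_inv_val x
      have hfld : ((x : ZMod p))⁻¹ + 1 = ((x : ZMod p) + 1) * ((x : ZMod p))⁻¹ := by
        rw [add_mul, one_mul, mul_inv_cancel₀ hx0, add_comm]
      rw [hsub, hinv, hfld, mul_pow, inv_pow]
    rw [Finset.sum_congr rfl fun x _ => hterm x]
    have hinvsum : ∑ x : (ZMod p)ˣ, (((x⁻¹ : (ZMod p)ˣ) : ZMod p) + 1) ^ r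
        = ∑ x : (ZMod p)ˣ, ((x : ZMod p) + 1) ^ r :=
      Fintype.sum_equiv (Equiv.inv (ZMod p)ˣ) _ _ (fun x => rfl)
    rw [hinvsum]
    let e1 : (ZMod p)ˣ ↪ ZMod p :=
      ⟨fun x => (x : ZMod p) + 1, by intro x y h; exact Units.ext (by simpa using h)⟩
    have himg : Finset.univ.map e1 = Finset.univ \ {(1 : ZMod p)} := by
      ext y
      simp only [mem_map, mem_univ, true_and, mem_sdiff, mem_singleton, e1,
        Function.Embedding.coeFn_mk]
      constructor
      · rintro ⟨x, rfl⟩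
        intro h
        exact x.ne_zero (by change (x : ZMod p) + 1 = 1 at h; linear_combination h)
      · intro h
        have hy : y - 1 ≠ 0 := sub_ne_zero.mpr h
        exact ⟨Units.mk0 (y - 1) hy, by show ((Units.mk0 (y - 1) hy : (ZMod p)ˣ) : ZMod p) + 1 = y; simp⟩
    have h1 : ∑ x : (ZMod p)ˣ, ((x : ZMod p) + 1) ^ r
        = ∑ y ∈ Finset.univ \ {(1 : ZMod p)}, y ^ r := by
      rw [← himg, Finset.sum_map]
      rfl
    let e0 : (ZMod p)ˣ ↪ ZMod p := ⟨fun x => (x : ZMod p), by intro x y h; exact Units.ext h⟩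
    have himg0 : Finset.univ.map e0 = Finset.univ \ {(0 : ZMod p)} := by
      ext y
      simp only [mem_map, mem_univ, true_and, mem_sdiff, mem_singleton, e0,
        Function.Embedding.coeFn_mk]
      constructor
      · rintro ⟨x, rfl⟩; exact x.ne_zero
      · intro h
        exact ⟨Units.mk0 y h, rfl⟩
    have hall : ∑ y : ZMod p, y ^ r = if d ∣ r then (-1 : ZMod p) else 0 := by
      have hsplit := Finset.sum_sdiff
        (Finset.singleton_subset_iff.mpr (mem_univ (0 : ZMod p))) (f := fun y => y ^ r)
      rw [Finset.sum_singleton, zero_pow (by omega : r ≠ 0), add_zero] at hsplit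
      rw [← hsplit, ← himg0, Finset.sum_map]
      exact husum r
    have hsplit1 := Finset.sum_sdiff
      (Finset.singleton_subset_iff.mpr (mem_univ (1 : ZMod p))) (f := fun y => y ^ r)
    rw [Finset.sum_singleton, one_pow] at hsplit1
    rw [h1]
    rw [hall] at hsplit1
    linear_combination hsplit1
  -- assemble
  rw [← ZMod.intCast_zmod_eq_zero_iff_dvd]
  push_cast
  have hset : range (r + 1) = insert r (insert 0 (Ioo 0 r)) := by
    ext j
    simp only [mem_range, mem_insert, mem_Ioo]
    omega
  have hr_notmem : r ∉ insert 0 ((Ioo 0 r).filter (fun j => j % d = a % d)) := by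
    simp only [mem_insert, mem_filter, mem_Ioo]
    omega
  have hr_notmem' : r ∉ (Ioo 0 r).filter (fun j => j % d = a % d) := by
    simp only [mem_filter, mem_Ioo]
    omega
  have h0_notmem : (0 : ℕ) ∉ (Ioo 0 r).filter (fun j => j % d = a % d) := by
    simp only [mem_filter, mem_Ioo]
    omega
  have hkey := keyA.symm.trans keyB
  by_cases hdr : d ∣ r
  · have haeq : a = d := hadr.mp hdr
    have hP0 : (0 : ℕ) % d = a % d := by rw [haeq, Nat.mod_self, Nat.zero_mod]
    have hsum : ∑ j ∈ (range (r + 1)).filter (fun j => j % d = a % d), (r.choose j : ZMod p)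
        = 1 + (1 + ∑ j ∈ (Ioo 0 r).filter (fun j => j % d = a % d), (r.choose j : ZMod p)) := by
      rw [hset, Finset.filter_insert, if_pos hra', Finset.filter_insert, if_pos hP0,
        Finset.sum_insert hr_notmem, Finset.sum_insert h0_notmem, Nat.choose_self,
        Nat.choose_zero_right]
      push_cast
      ring
    rw [hsum, if_pos hdr] at hkey
    linear_combination -hkey
  · have hP0 : ¬ ((0 : ℕ) % d = a % d) := by
      rw [Nat.zero_mod]
      intro h
      have hda : d ∣ a := Nat.dvd_of_mod_eq_zero h.symm
      exact hdr (hadr.mpr (Nat.le_antisymm ha2 (Nat.le_of_dvd (by omega) hda)))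
    have hsum : ∑ j ∈ (range (r + 1)).filter (fun j => j % d = a % d), (r.choose j : ZMod p)
        = 1 + ∑ j ∈ (Ioo 0 r).filter (fun j => j % d = a % d), (r.choose j : ZMod p) := by
      rw [hset, Finset.filter_insert, if_pos hra', Finset.filter_insert, if_neg hP0,
        Finset.sum_insert hr_notmem', Nat.choose_self]
      push_cast
      ring
    rw [hsum, if_neg hdr] at hkey
    linear_combination -hkey
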